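/- For any S ⊆ ℕ⁺ and every positive integer n, the number of S-divisors satisfies τ_S(n) = Σ_{d² | n} μ_S(d) τ(n/d²) = Σ_{d² | n} ρ_S(d) τ*(n/d²), where τ is the number-of-divisors function and τ*(m) is the number of unitary divisors of m (divisors d of m with gcd(d, m/d) = 1). -/

import Mathlib

open Finset
open scoped Classical

/-- Characteristic function of `S` (integer-valued). -/
noncomputable def rhoZ (S : Set ℕ) (n : ℕ) : ℤ :=
  if n ∈ S then 1 else 0

/-- The Möbius function of the set `S`. -/
noncomputable def muSZ (S : Set ℕ) (n : ℕ) : ℤ :=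
  ∑ d ∈ n.divisors, rhoZ S d * ArithmeticFunction.moebius (n / d)

/-- The number of `S`-divisors of `n`. -/
noncomputable def tauS (S : Set ℕ) (n : ℕ) : ℕ :=
  (n.divisors.filter (fun d => Nat.gcd d (n / d) ∈ S)).card

/-- The sum of the `S`-divisors of `n`. -/
noncomputable def sigmaS (S : Set ℕ) (n : ℕ) : ℕ :=
  ∑ d ∈ n.divisors.filter (fun d => Nat.gcd d (n / d) ∈ S), d

/-- The number of unitary divisors of `n`. -/
def tauStar (n : ℕ) : ℕ :=
  (n.divisors.filter (fun d => Nat.gcd d (n / d) = 1)).card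

/-- The sum of the unitary divisors of `n`. -/
def sigmaStar (n : ℕ) : ℕ :=
  ∑ d ∈ n.divisors.filter (fun d => Nat.gcd d (n / d) = 1), d

local notation "μ" => ArithmeticFunction.moebius

lemma sum_div_moeb (k : ℕ) :
    ∑ t ∈ k.divisors, (μ t : ℤ) = if k = 1 then 1 else 0 := by
  rw [← ArithmeticFunction.coe_mul_zeta_apply, ArithmeticFunction.moebius_mul_coe_zeta,
    ArithmeticFunction.one_apply]

/-- Fiber of the gcd map over `d` has cardinality `tauStar (n / d^2)`. -/
lemma fiber_card (n d : ℕ) (hn : 0 < n) (hd : d ∣ n) (hd2 : d ^ 2 ∣ n) :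
    (n.divisors.filter (fun f => Nat.gcd f (n / f) = d)).card = tauStar (n / d ^ 2) := by
  have hn0 : n ≠ 0 := hn.ne'
  have hd0 : d ≠ 0 := by rintro rfl; simp at hd; omega
  have hm : n = d ^ 2 * (n / d ^ 2) := (Nat.mul_div_cancel' hd2).symm
  set m := n / d ^ 2 with hmdef
  have hm0 : m ≠ 0 := by rintro h; rw [h, mul_zero] at hm; omega
  rw [tauStar]
  apply Finset.card_bij (fun f _ => f / d)
  · -- maps into
    intro f hf
    simp only [mem_filter, Nat.mem_divisors] at hf ⊢
    obtain ⟨⟨hfn, -⟩, hg⟩ := hf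
    have hf0 : f ≠ 0 := by rintro rfl; simp at hfn; omega
    have hdf : d ∣ f := hg ▸ Nat.gcd_dvd_left _ _
    have hdnf : d ∣ n / f := hg ▸ Nat.gcd_dvd_right _ _
    set a := f / d with hadef
    set b := (n / f) / d with hbdef
    have hfa : f = d * a := (Nat.mul_div_cancel' hdf).symm
    have hnb : n / f = d * b := (Nat.mul_div_cancel' hdnf).symm
    have hnfab : n = d ^ 2 * (a * b) := by
      have h1 : f * (n / f) = n := Nat.mul_div_cancel' hfn
      calc n = f * (n / f) := h1.symm
        _ = (d * a) * (d * b) := by rw [← hfa, ← hnb]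
        _ = d ^ 2 * (a * b) := by ring
    have hmab : m = a * b := by
      rw [hmdef]
      rw [hnfab, Nat.mul_div_cancel_left _ (by positivity)]
    have ha0 : a ≠ 0 := by rintro h; rw [h, mul_zero] at hfa; exact hf0 hfa
    have hco : Nat.Coprime a b := by
      have hgpos : 0 < Nat.gcd f (n / f) := by rw [hg]; omega
      have := Nat.coprime_div_gcd_div_gcd hgpos
      rwa [hg] at this
    refine ⟨⟨?_, hm0⟩, ?_⟩
    · rw [hmab]; exact Dvd.intro_left b (by ring)
    · have : m / a = b := by rw [hmab, Nat.mul_div_cancel_left _ (Nat.pos_of_ne_zero ha0)]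
      rw [this]; exact hco
  · -- injective
    intro f₁ hf₁ f₂ hf₂ h
    simp only [mem_filter, Nat.mem_divisors] at hf₁ hf₂
    have h1 : d ∣ f₁ := hf₁.2 ▸ Nat.gcd_dvd_left _ _
    have h2 : d ∣ f₂ := hf₂.2 ▸ Nat.gcd_dvd_left _ _
    rw [← Nat.mul_div_cancel' h1, ← Nat.mul_div_cancel' h2, h]
  · -- surjective
    intro e he
    simp only [mem_filter, Nat.mem_divisors] at he
    obtain ⟨⟨hem, -⟩, hco⟩ := he
    have he0 : e ≠ 0 := by rintro rfl; simp at hem; exact hm0 hem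
    refine ⟨d * e, ?_, ?_⟩
    · simp only [mem_filter, Nat.mem_divisors]
      have hfn : d * e ∣ n := by
        rw [hm]
        have : d * e ∣ d * m := mul_dvd_mul_left d hem
        calc d * e ∣ d * m := this
          _ ∣ d ^ 2 * m := by
              apply mul_dvd_mul_right
              exact Dvd.intro d (by ring)
      have hndiv : n / (d * e) = d * (m / e) := by
        have key : n = (d * e) * (d * (m / e)) := by
          have : e * (m / e) = m := Nat.mul_div_cancel' hem
          calc n = d ^ 2 * m := hm
            _ = d ^ 2 * (e * (m / e)) := by rw [this]
            _ = (d * e) * (d * (m / e)) := by ring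
        rw [key, Nat.mul_div_cancel_left]
        positivity
      refine ⟨⟨hfn, hn0⟩, ?_⟩
      rw [hndiv, Nat.gcd_mul_left, hco, mul_one]
    · rw [Nat.mul_div_cancel_left _ (Nat.pos_of_ne_zero hd0)]

/-- Second identity, natural number version via fibering. -/
lemma tauS_eq_sum (S : Set ℕ) (n : ℕ) (hn : 0 < n) :
    tauS S n = ∑ d ∈ n.divisors.filter (fun d => d ^ 2 ∣ n),
      (if d ∈ S then tauStar (n / d ^ 2) else 0) := by
  have hn0 : n ≠ 0 := hn.ne'
  rw [tauS]
  rw [Finset.card_eq_sum_card_fiberwise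
    (f := fun f => Nat.gcd f (n / f))
    (t := n.divisors.filter (fun d => d ^ 2 ∣ n)) ?_]
  · apply Finset.sum_congr rfl
    intro d hd
    simp only [mem_filter, Nat.mem_divisors] at hd
    obtain ⟨⟨hdn, -⟩, hd2⟩ := hd
    by_cases hdS : d ∈ S
    · rw [if_pos hdS, ← fiber_card n d hn hdn hd2]
      congr 1
      rw [Finset.filter_filter]
      apply Finset.filter_congr
      intro f _
      constructor
      · rintro ⟨-, h⟩; exact h
      · intro h; exact ⟨by rw [h]; exact hdS, h⟩
    · rw [if_neg hdS]
      rw [Finset.card_eq_zero, Finset.filter_filter, Finset.filter_eq_empty_iff]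
      rintro f _ ⟨hS, hg⟩
      exact hdS (hg ▸ hS)
  · intro f hf
    simp only [Finset.mem_coe, mem_filter, Nat.mem_divisors] at hf ⊢
    obtain ⟨⟨hfn, -⟩, -⟩ := hf
    have h1 : Nat.gcd f (n / f) ∣ f := Nat.gcd_dvd_left _ _
    refine ⟨⟨h1.trans hfn, hn0⟩, ?_⟩
    have h2 : Nat.gcd f (n / f) ∣ n / f := Nat.gcd_dvd_right _ _
    have : f * (n / f) = n := Nat.mul_div_cancel' hfn
    calc Nat.gcd f (n / f) ^ 2 = Nat.gcd f (n / f) * Nat.gcd f (n / f) := sq _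
      _ ∣ f * (n / f) := mul_dvd_mul h1 h2
      _ = n := this

/-- Classical: `τ*(m) = ∑_{t² ∣ m} μ(t) τ(m/t²)`. -/
lemma tauStar_eq_sum_moebius (m : ℕ) (hm : 0 < m) :
    (tauStar m : ℤ) = ∑ t ∈ m.divisors.filter (fun t => t ^ 2 ∣ m),
      (μ t : ℤ) * (m / t ^ 2).divisors.card := by
  have hm0 : m ≠ 0 := hm.ne'
  have step1 : ∀ t, (μ t : ℤ) * ((m / t ^ 2).divisors.card : ℤ)
      = ∑ _e ∈ (m / t ^ 2).divisors, (μ t : ℤ) := by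
    intro t; rw [Finset.sum_const, nsmul_eq_mul, mul_comm]
  rw [Finset.sum_congr rfl (fun t _ => step1 t)]
  rw [Finset.sum_sigma']
  have key : ∑ p ∈ (m.divisors.filter (fun t => t ^ 2 ∣ m)).sigma
        (fun t => (m / t ^ 2).divisors), (μ p.1 : ℤ)
      = ∑ p ∈ m.divisors.sigma (fun x => (Nat.gcd x (m / x)).divisors), (μ p.2 : ℤ) := by
    apply Finset.sum_nbij' (i := fun p => (⟨p.1 * p.2, p.1⟩ : Σ _ : ℕ, ℕ))
      (j := fun p => (⟨p.2, p.1 / p.2⟩ : Σ _ : ℕ, ℕ))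
    · rintro ⟨t, e⟩ hp
      simp only [Finset.mem_sigma, mem_filter, Nat.mem_divisors] at hp ⊢
      obtain ⟨⟨⟨htm, -⟩, ht2⟩, hem, -⟩ := hp
      have ht0 : t ≠ 0 := by rintro rfl; simp at htm; omega
      have he0 : e ≠ 0 := by
        rintro rfl
        simp only [zero_dvd_iff] at hem
        have : m / t ^ 2 ≠ 0 := Nat.div_ne_zero_iff.mpr ⟨by positivity, Nat.le_of_dvd hm ht2⟩
        exact this hem
      set M := m / t ^ 2 with hMdef
      have hM : m = t ^ 2 * M := (Nat.mul_div_cancel' ht2).symm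
      have hxm : t * e ∣ m := by
        calc t * e ∣ t * M := mul_dvd_mul_left t hem
          _ ∣ t ^ 2 * M := mul_dvd_mul_right (Dvd.intro t (by ring)) M
          _ = m := hM.symm
      refine ⟨⟨hxm, hm0⟩, ?_, ?_⟩
      · -- t ∣ gcd (t*e) (m/(t*e))
        have hdiv : m / (t * e) = t * (M / e) := by
          have key2 : m = (t * e) * (t * (M / e)) := by
            have : e * (M / e) = M := Nat.mul_div_cancel' hem
            calc m = t ^ 2 * M := hM
              _ = t ^ 2 * (e * (M / e)) := by rw [this]
              _ = (t * e) * (t * (M / e)) := by ring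
          rw [key2, Nat.mul_div_cancel_left]
          positivity
        apply Nat.dvd_gcd (Dvd.intro e rfl)
        rw [hdiv]; exact Dvd.intro _ rfl
      · -- gcd ≠ 0
        intro h
        have := Nat.gcd_eq_zero_iff.mp h
        exact (by positivity : t * e ≠ 0) this.1
    · rintro ⟨x, t⟩ hp
      simp only [Finset.mem_sigma, mem_filter, Nat.mem_divisors] at hp ⊢
      obtain ⟨⟨hxm, -⟩, htg, -⟩ := hp
      have hx0 : x ≠ 0 := by rintro rfl; simp at hxm; omega
      have htx : t ∣ x := htg.trans (Nat.gcd_dvd_left _ _)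
      have htmx : t ∣ m / x := htg.trans (Nat.gcd_dvd_right _ _)
      have ht0 : t ≠ 0 := by rintro rfl; exact hx0 (zero_dvd_iff.mp htx)
      have hxmx : x * (m / x) = m := Nat.mul_div_cancel' hxm
      have ht2 : t ^ 2 ∣ m := by
        calc t ^ 2 = t * t := sq t
          _ ∣ x * (m / x) := mul_dvd_mul htx htmx
          _ = m := hxmx
      refine ⟨⟨⟨htx.trans hxm, hm0⟩, ht2⟩, ?_, ?_⟩
      · -- x / t ∣ m / t^2
        rw [Nat.dvd_div_iff_mul_dvd ht2]
        have : t ^ 2 * (x / t) = t * x := by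
          rw [sq, mul_assoc, Nat.mul_div_cancel' htx]
        rw [this]
        calc t * x ∣ (m / x) * x := mul_dvd_mul_right htmx x
          _ = m := by rw [mul_comm]; exact hxmx
      · -- m / t^2 ≠ 0
        exact Nat.div_ne_zero_iff.mpr ⟨by positivity, Nat.le_of_dvd hm ht2⟩
    · rintro ⟨t, e⟩ hp
      simp only [Finset.mem_sigma, mem_filter, Nat.mem_divisors] at hp
      obtain ⟨⟨⟨htm, -⟩, -⟩, -⟩ := hp
      have ht0 : t ≠ 0 := by rintro rfl; simp at htm; omega
      simp [Nat.mul_div_cancel_left _ (Nat.pos_of_ne_zero ht0)]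
    · rintro ⟨x, t⟩ hp
      simp only [Finset.mem_sigma, mem_filter, Nat.mem_divisors] at hp
      obtain ⟨⟨hxm, -⟩, htg, -⟩ := hp
      have htx : t ∣ x := htg.trans (Nat.gcd_dvd_left _ _)
      simp [Nat.mul_div_cancel' htx]
    · rintro ⟨t, e⟩ _; rfl
  rw [key, Finset.sum_sigma]
  have : ∀ x ∈ m.divisors,
      ∑ t ∈ (Nat.gcd x (m / x)).divisors, (μ t : ℤ)
        = if Nat.gcd x (m / x) = 1 then 1 else 0 := fun x _ => sum_div_moeb _
  rw [Finset.sum_congr rfl this, Finset.sum_boole]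
  simp [tauStar]

theorem tauS_identities (S : Set ℕ) (n : ℕ) (hn : 0 < n) :
    ((tauS S n : ℤ) =
      ∑ d ∈ n.divisors.filter (fun d => d ^ 2 ∣ n),
        muSZ S d * (n / d ^ 2).divisors.card) ∧
    ((tauS S n : ℤ) =
      ∑ d ∈ n.divisors.filter (fun d => d ^ 2 ∣ n),
        rhoZ S d * tauStar (n / d ^ 2)) := by
  have hn0 : n ≠ 0 := hn.ne'
  have h2 : (tauS S n : ℤ) =
      ∑ d ∈ n.divisors.filter (fun d => d ^ 2 ∣ n),
        rhoZ S d * tauStar (n / d ^ 2) := by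
    rw [tauS_eq_sum S n hn]
    push_cast
    apply Finset.sum_congr rfl
    intro d _
    by_cases hdS : d ∈ S <;> simp [rhoZ, hdS]
  refine ⟨?_, h2⟩
  rw [h2]
  -- Now show the μS-sum equals the ρ-τ* sum.
  have expand : ∀ d : ℕ, muSZ S d * ((n / d ^ 2).divisors.card : ℤ)
      = ∑ c ∈ d.divisors, rhoZ S c * (μ (d / c) : ℤ) * ((n / d ^ 2).divisors.card : ℤ) := by
    intro d; rw [muSZ, Finset.sum_mul]
  rw [Finset.sum_congr rfl (fun d _ => expand d), Finset.sum_sigma']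
  have key : ∑ p ∈ (n.divisors.filter (fun d => d ^ 2 ∣ n)).sigma (fun d => d.divisors),
        rhoZ S p.2 * (μ (p.1 / p.2) : ℤ) * ((n / p.1 ^ 2).divisors.card : ℤ)
      = ∑ p ∈ (n.divisors.filter (fun d => d ^ 2 ∣ n)).sigma
          (fun c => (n / c ^ 2).divisors.filter (fun t => t ^ 2 ∣ n / c ^ 2)),
        rhoZ S p.1 * ((μ p.2 : ℤ) * (((n / p.1 ^ 2) / p.2 ^ 2).divisors.card : ℤ)) := by
    apply Finset.sum_nbij' (i := fun p => (⟨p.2, p.1 / p.2⟩ : Σ _ : ℕ, ℕ))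
      (j := fun p => (⟨p.1 * p.2, p.1⟩ : Σ _ : ℕ, ℕ))
    · rintro ⟨d, c⟩ hp
      simp only [Finset.mem_sigma, mem_filter, Nat.mem_divisors] at hp ⊢
      obtain ⟨⟨⟨hdn, -⟩, hd2⟩, hcd, -⟩ := hp
      have hd0 : d ≠ 0 := by rintro rfl; simp at hdn; omega
      have hc0 : c ≠ 0 := by rintro rfl; exact hd0 (zero_dvd_iff.mp hcd)
      have hc2 : c ^ 2 ∣ n := (pow_dvd_pow_of_dvd hcd 2).trans hd2
      set t := d / c with htdef
      have hdct : d = c * t := (Nat.mul_div_cancel' hcd).symm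
      have ht2 : t ^ 2 ∣ n / c ^ 2 := by
        rw [Nat.dvd_div_iff_mul_dvd hc2, ← mul_pow, ← hdct]; exact hd2
      have hnc0 : n / c ^ 2 ≠ 0 :=
        Nat.div_ne_zero_iff.mpr ⟨by positivity, Nat.le_of_dvd hn hc2⟩
      refine ⟨⟨⟨hcd.trans hdn, hn0⟩, hc2⟩, ⟨?_, hnc0⟩, ht2⟩
      exact dvd_trans (dvd_pow_self t two_ne_zero) ht2
    · rintro ⟨c, t⟩ hp
      simp only [Finset.mem_sigma, mem_filter, Nat.mem_divisors] at hp ⊢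
      obtain ⟨⟨⟨hcn, -⟩, hc2⟩, ⟨htn, -⟩, ht2⟩ := hp
      have hd2 : (c * t) ^ 2 ∣ n := by
        rw [mul_pow]; exact (Nat.dvd_div_iff_mul_dvd hc2).mp ht2
      have hd0 : c * t ≠ 0 := by
        have hc0 : c ≠ 0 := by rintro rfl; simp at hcn; omega
        have hnc0 : n / c ^ 2 ≠ 0 :=
          Nat.div_ne_zero_iff.mpr ⟨by positivity, Nat.le_of_dvd hn hc2⟩
        have ht0 : t ≠ 0 := by rintro rfl; exact hnc0 (zero_dvd_iff.mp htn)
        positivity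
      refine ⟨⟨⟨?_, hn0⟩, hd2⟩, Dvd.intro t rfl, hd0⟩
      exact dvd_trans (dvd_pow_self _ two_ne_zero) hd2
    · rintro ⟨d, c⟩ hp
      simp only [Finset.mem_sigma, mem_filter, Nat.mem_divisors] at hp
      obtain ⟨-, hcd, -⟩ := hp
      simp [Nat.mul_div_cancel' hcd]
    · rintro ⟨c, t⟩ hp
      simp only [Finset.mem_sigma, mem_filter, Nat.mem_divisors] at hp
      have hc0 : c ≠ 0 := by
        rintro rfl
        obtain ⟨⟨⟨hcn, -⟩, -⟩, -⟩ := hp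
        simp at hcn; omega
      simp [Nat.mul_div_cancel_left _ (Nat.pos_of_ne_zero hc0)]
    · rintro ⟨d, c⟩ hp
      simp only [Finset.mem_sigma, mem_filter, Nat.mem_divisors] at hp
      obtain ⟨⟨⟨hdn, -⟩, hd2⟩, hcd, -⟩ := hp
      have hdiv : (n / c ^ 2) / (d / c) ^ 2 = n / d ^ 2 := by
        have hc2 : c ^ 2 ∣ n := (pow_dvd_pow_of_dvd hcd 2).trans hd2
        rw [Nat.div_div_eq_div_mul, ← mul_pow, Nat.mul_div_cancel' hcd]
      rw [hdiv]; ring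
  rw [key, Finset.sum_sigma]
  apply Finset.sum_congr rfl
  intro c hc
  simp only [mem_filter, Nat.mem_divisors] at hc
  obtain ⟨⟨hcn, -⟩, hc2⟩ := hc
  have hnc : 0 < n / c ^ 2 := Nat.div_pos (Nat.le_of_dvd hn hc2) (by
    have hc0 : c ≠ 0 := by rintro rfl; simp at hcn; omega
    positivity)
  rw [tauStar_eq_sum_moebius _ hnc, Finset.mul_sum]
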